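/- Let m > 1 be an integer. The map h/k ↦ (k−h)/h is an order-reversing bijection from F^{≥1/2}(B(2m),m) onto the Farey sequence F_m, and the map h/k ↦ k/(k+h) is its inverse, an order-reversing bijection from F_m onto F^{≥1/2}(B(2m),m). (Here h/k denotes a fraction in lowest terms.) -/

import Mathlib

/-- The Farey sequence `F_n` of order `n`, viewed as the set of rationals `q`
with `0 ≤ q ≤ 1` whose lowest-terms denominator is at most `n`. -/
def Farey (n : ℕ) : Set ℚ :=
  {q : ℚ | 0 ≤ q ∧ q ≤ 1 ∧ q.den ≤ n}

/-- The Farey subsequence `F(B(n),m)`: fractions `h/k ∈ F_n` in lowest terms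
with `h ≤ m` and `k - h ≤ n - m`. -/
def FareyB (n m : ℕ) : Set ℚ :=
  {q : ℚ | 0 ≤ q ∧ q ≤ 1 ∧ q.den ≤ n ∧ q.num ≤ (m : ℤ) ∧
    (q.den : ℤ) - q.num ≤ (n : ℤ) - (m : ℤ)}

/-- `f'` is the predecessor of `f` in the set `S` of rationals. -/
def IsPredIn (S : Set ℚ) (f' f : ℚ) : Prop :=
  f' ∈ S ∧ f ∈ S ∧ f' < f ∧ ∀ g ∈ S, ¬(f' < g ∧ g < f)

/-- `f'` is the successor of `f` in the set `S` of rationals. -/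
def IsSuccIn (S : Set ℚ) (f f' : ℚ) : Prop :=
  f ∈ S ∧ f' ∈ S ∧ f < f' ∧ ∀ g ∈ S, ¬(f < g ∧ g < f')

/-- The right halfsequence `F^{≥1/2}(B(2m),m)`. -/
def FareyBRight (m : ℕ) : Set ℚ := {q ∈ FareyB (2 * m) m | 1 / 2 ≤ q}

/-- On a fraction `q = h/k` in lowest terms, the map `h/k ↦ (k-h)/h`. -/
def phi (q : ℚ) : ℚ := ((q.den : ℚ) - (q.num : ℚ)) / (q.num : ℚ)

/-- On a fraction `q = h/k` in lowest terms, the map `h/k ↦ k/(k+h)`. -/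
def psi (q : ℚ) : ℚ := (q.den : ℚ) / ((q.den : ℚ) + (q.num : ℚ))

lemma phi_eq (q : ℚ) (hq : 0 < q) : phi q = q⁻¹ - 1 := by
  have h0 : (0:ℚ) < q.num := by exact_mod_cast Rat.num_pos.mpr hq
  have key : q * (q.den:ℚ) = q.num := Rat.mul_den_eq_num q
  rw [phi]
  field_simp
  linear_combination key

lemma psi_eq (q : ℚ) (hq : 0 ≤ q) : psi q = (1 + q)⁻¹ := by
  have h0 : (0:ℚ) ≤ q.num := by exact_mod_cast Rat.num_nonneg.mpr hq
  have h2 : (0:ℚ) < q.den := by exact_mod_cast q.pos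
  have key : q * (q.den:ℚ) = q.num := Rat.mul_den_eq_num q
  rw [psi]
  rw [inv_eq_one_div, div_eq_div_iff (by positivity) (by positivity)]
  linear_combination key

lemma num_le_den_of_le_one (q : ℚ) (h : q ≤ 1) : q.num ≤ (q.den : ℤ) := by
  have : q.num = q * (q.den : ℚ) := (Rat.mul_den_eq_num q).symm
  have h2 : (0:ℚ) < q.den := by exact_mod_cast q.pos
  have : (q.num : ℚ) ≤ (q.den : ℚ) := by
    rw [this]
    nlinarith
  exact_mod_cast this

lemma phi_num (q : ℚ) (h1 : 0 < q) (h2 : q ≤ 1) :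
    (phi q).num = (q.den : ℤ) - q.num ∧ ((phi q).den : ℤ) = q.num := by
  have hnum : 0 < q.num := Rat.num_pos.mpr h1
  have hle : q.num ≤ (q.den : ℤ) := num_le_den_of_le_one q h2
  have hcop : Nat.Coprime ((q.den : ℤ) - q.num).natAbs q.num.natAbs := by
    have habs : ((q.den : ℤ) - q.num).natAbs = q.den - q.num.natAbs := by
      omega
    rw [habs]
    have := q.reduced
    have h3 : q.num.natAbs ≤ q.den := by omega
    unfold Nat.Coprime at *
    rw [Nat.gcd_sub_self_left h3, Nat.gcd_comm]
    exact this
  have hphi : phi q = (((q.den : ℤ) - q.num : ℤ) : ℚ) / ((q.num : ℤ) : ℚ) := by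
    rw [phi]; push_cast; ring
  constructor
  · rw [hphi]; exact Rat.num_div_eq_of_coprime hnum hcop
  · rw [hphi]; exact Rat.den_div_eq_of_coprime hnum hcop

lemma psi_num (q : ℚ) (h1 : 0 ≤ q) :
    (psi q).num = (q.den : ℤ) ∧ ((psi q).den : ℤ) = (q.den : ℤ) + q.num := by
  have hnum : 0 ≤ q.num := Rat.num_nonneg.mpr h1
  have hpos : 0 < (q.den : ℤ) + q.num := by have := q.pos; omega
  have hcop : Nat.Coprime (q.den : ℤ).natAbs ((q.den : ℤ) + q.num).natAbs := by
    have habs : ((q.den : ℤ) + q.num).natAbs = q.den + q.num.natAbs := by omega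
    have habs2 : ((q.den : ℤ)).natAbs = q.den := by omega
    rw [habs, habs2]
    have := q.reduced
    unfold Nat.Coprime at *
    rw [Nat.add_comm, Nat.gcd_add_self_right, Nat.gcd_comm]
    exact this
  have hpsi : psi q = (((q.den : ℤ)) : ℚ) / (((q.den : ℤ) + q.num : ℤ) : ℚ) := by
    rw [psi]; push_cast; ring
  constructor
  · rw [hpsi]; exact Rat.num_div_eq_of_coprime hpos hcop
  · rw [hpsi]; exact Rat.den_div_eq_of_coprime hpos hcop

/-- For `m > 1`, the map `h/k ↦ (k-h)/h` is an order-reversing bijection from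
`F^{≥1/2}(B(2m),m)` onto `F_m`, with order-reversing inverse `h/k ↦ k/(k+h)`. -/
theorem stmt_5 (m : ℕ) (hm : 1 < m) :
    (∀ q ∈ FareyBRight m, phi q ∈ Farey m) ∧
    (∀ q ∈ Farey m, psi q ∈ FareyBRight m) ∧
    (∀ q ∈ FareyBRight m, psi (phi q) = q) ∧
    (∀ q ∈ Farey m, phi (psi q) = q) ∧
    (∀ q ∈ FareyBRight m, ∀ q' ∈ FareyBRight m, q < q' → phi q' < phi q) ∧
    (∀ q ∈ Farey m, ∀ q' ∈ Farey m, q < q' → psi q' < psi q) := by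
  have hhalf : (0:ℚ) < 1/2 := by norm_num
  refine ⟨?_, ?_, ?_, ?_, ?_, ?_⟩
  · -- phi maps right half to Farey m
    rintro q ⟨⟨h0, h1, hden, hnum, hdiff⟩, hhf⟩
    have hq0 : 0 < q := lt_of_lt_of_le hhalf hhf
    obtain ⟨hn, hd⟩ := phi_num q hq0 h1
    refine ⟨?_, ?_, ?_⟩
    · rw [phi_eq q hq0]
      have : 1 ≤ q⁻¹ := (one_le_inv_iff₀.mpr ⟨hq0, h1⟩ : _)
      linarith
    · rw [phi_eq q hq0]
      have : q⁻¹ ≤ (1/2 : ℚ)⁻¹ := by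
        apply inv_anti₀ hhalf hhf
      norm_num at this
      linarith
    · have : ((phi q).den : ℤ) ≤ (m : ℤ) := by rw [hd]; exact hnum
      exact_mod_cast this
  · -- psi maps Farey m to right half
    rintro q ⟨h0, h1, hden⟩
    have hnum : 0 ≤ q.num := Rat.num_nonneg.mpr h0
    have hnd : q.num ≤ (q.den : ℤ) := num_le_den_of_le_one q h1
    have hdm : (q.den : ℤ) ≤ (m : ℤ) := by exact_mod_cast hden
    obtain ⟨hn, hd⟩ := psi_num q h0
    have hq1 : 0 ≤ 1 + q := by linarith
    refine ⟨⟨?_, ?_, ?_, ?_, ?_⟩, ?_⟩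
    · rw [psi_eq q h0]; positivity
    · rw [psi_eq q h0]
      rw [inv_le_one_iff₀]
      right; linarith
    · have : ((psi q).den : ℤ) ≤ ((2 * m : ℕ) : ℤ) := by
        rw [hd]; push_cast; omega
      exact_mod_cast this
    · rw [hn]; exact hdm
    · rw [hn, hd]; push_cast; omega
    · rw [psi_eq q h0]
      rw [le_inv_comm₀ hhalf (by linarith)]
      norm_num; linarith
  · -- psi ∘ phi = id on right half
    rintro q ⟨⟨h0, h1, hden, hnum, hdiff⟩, hhf⟩
    have hq0 : 0 < q := lt_of_lt_of_le hhalf hhf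
    have hphi0 : 0 ≤ phi q := by
      rw [phi_eq q hq0]
      have : 1 ≤ q⁻¹ := one_le_inv_iff₀.mpr ⟨hq0, h1⟩
      linarith
    rw [psi_eq _ hphi0, phi_eq q hq0]
    field_simp
    ring
  · -- phi ∘ psi = id on Farey m
    rintro q ⟨h0, h1, hden⟩
    have hpsi0 : 0 < psi q := by
      rw [psi_eq q h0]; positivity
    rw [phi_eq _ hpsi0, psi_eq q h0]
    rw [inv_inv]; ring
  · -- phi antitone
    rintro q ⟨⟨_, hq1, _, _, _⟩, hqh⟩ q' ⟨⟨_, hq'1, _, _, _⟩, hq'h⟩ hlt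
    have hq0 : 0 < q := lt_of_lt_of_le hhalf hqh
    have hq'0 : 0 < q' := lt_of_lt_of_le hhalf hq'h
    rw [phi_eq q hq0, phi_eq q' hq'0]
    have : q'⁻¹ < q⁻¹ := by
      apply inv_strictAnti₀ hq0 hlt
    linarith
  · -- psi antitone
    rintro q ⟨hq0, _, _⟩ q' ⟨hq'0, _, _⟩ hlt
    rw [psi_eq q hq0, psi_eq q' hq'0]
    have h1 : (0:ℚ) < 1 + q := by linarith
    have : (1 + q)⁻¹ > (1 + q')⁻¹ := by
      apply inv_strictAnti₀ h1 (by linarith)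
    linarith
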